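/- Let p be a nonzero real polynomial that is odd (p(-y) = -p(y) for all y ∈ ℝ), of degree k ≠ 1, having k distinct real roots. Let n be a positive integer with k ∣ n. Then the set S = { z : Fin n → ℝ | ∑_{i} z_i = 0 and there exists λ ∈ ℝ such that p(z_i) = λ for all i } is uncountable. -/

import Mathlib

open Polynomial in
lemma aux_coeff_comp_neg_X (p : Polynomial ℝ) (m : ℕ) :
    (p.comp (-Polynomial.X)).coeff m = (-1)^m * p.coeff m := by
  induction p using Polynomial.induction_on' with
  | add p q hp hq => simp [add_comp, hp, hq, mul_add]
  | monomial i a =>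
    rw [monomial_comp]
    have h : (-X : Polynomial ℝ)^i = C ((-1)^i) * X^i := by
      rw [neg_pow]; simp [map_pow]
    rw [h, coeff_monomial, ← mul_assoc, ← C_mul, coeff_C_mul, coeff_X_pow]
    by_cases him : i = m
    · subst him; simp [mul_comm]
    · simp [him, Ne.symm him]

lemma aux_sign (P Q l : ℝ) (h : P * Q < 0) (h1 : |l| < |P|) (h2 : |l| < |Q|) :
    (P - l) * (Q - l) < 0 := by
  rcases abs_cases l with ⟨e1,_⟩|⟨e1,_⟩ <;> rcases abs_cases P with ⟨e2,_⟩|⟨e2,_⟩ <;>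
    rcases abs_cases Q with ⟨e3,_⟩|⟨e3,_⟩ <;> nlinarith

open Polynomial in
/-- Root counting via alternating signs and IVT. -/
lemma aux_card_roots (q : Polynomial ℝ) (k : ℕ) (hqdeg : q.natDegree = k) (hq0 : q ≠ 0)
    (t : Fin (k+1) → ℝ) (ht : StrictMono t)
    (qalt : ∀ i : Fin k, q.eval (t i.castSucc) * q.eval (t i.succ) < 0) :
    Multiset.card q.roots = k := by
  have hiv : ∀ i : Fin k, ∃ x ∈ Set.Ioo (t i.castSucc) (t i.succ), q.eval x = 0 := by
    intro i
    have hle : t i.castSucc ≤ t i.succ := (ht (Fin.castSucc_lt_succ (i := i))).le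
    have hcont : ContinuousOn (fun x => q.eval x) (Set.Icc (t i.castSucc) (t i.succ)) :=
      (Polynomial.continuous q).continuousOn
    rcases mul_neg_iff.mp (qalt i) with ⟨h1, h2⟩ | ⟨h1, h2⟩
    · have := intermediate_value_Ioo' hle hcont (a := t i.castSucc)
      have h0 : (0:ℝ) ∈ Set.Ioo (q.eval (t i.succ)) (q.eval (t i.castSucc)) := ⟨h2, h1⟩
      obtain ⟨x, hx, hx0⟩ := this h0
      exact ⟨x, hx, hx0⟩
    · have := intermediate_value_Ioo hle hcont
      have h0 : (0:ℝ) ∈ Set.Ioo (q.eval (t i.castSucc)) (q.eval (t i.succ)) := ⟨h1, h2⟩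
      obtain ⟨x, hx, hx0⟩ := this h0
      exact ⟨x, hx, hx0⟩
  choose ξ hξmem hξ0 using hiv
  have hξinj : Function.Injective ξ := by
    have hsm : StrictMono ξ := by
      intro a b hab
      calc ξ a < t a.succ := (hξmem a).2
        _ ≤ t b.castSucc := ht.monotone (by simp [Fin.le_def]; omega)
        _ < ξ b := (hξmem b).1
    exact hsm.injective
  refine le_antisymm (hqdeg ▸ q.card_roots') ?_
  calc k = (Finset.image ξ Finset.univ).card := by
        rw [Finset.card_image_of_injective _ hξinj]; simp
    _ ≤ q.roots.toFinset.card := by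
        apply Finset.card_le_card
        intro x hx
        obtain ⟨i, _, rfl⟩ := Finset.mem_image.mp hx
        rw [Multiset.mem_toFinset, mem_roots hq0]
        exact hξ0 i
    _ ≤ Multiset.card q.roots := Multiset.toFinset_card_le _

open Polynomial in
/-- Sum of roots is zero when the subleading coefficient vanishes. -/
lemma aux_sum_roots (q : Polynomial ℝ) (k : ℕ) (hk2 : 2 ≤ k) (hqdeg : q.natDegree = k)
    (hq0 : q ≠ 0) (hqcard : Multiset.card q.roots = k) (hcoeff : q.coeff (k - 1) = 0) :
    q.roots.sum = 0 := by
  have hfac := C_leadingCoeff_mul_prod_multiset_X_sub_C (p := q) (hqcard.trans hqdeg.symm)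
  have h1 : q.coeff (k - 1) = q.leadingCoeff * (-(q.roots.sum)) := by
    conv_lhs => rw [← hfac]
    rw [coeff_C_mul]
    congr 1
    have := multiset_prod_X_sub_C_coeff_card_pred q.roots (by rw [hqcard]; omega)
    rwa [hqcard] at this
  rw [hcoeff] at h1
  have hlc : q.leadingCoeff ≠ 0 := leadingCoeff_ne_zero.mpr hq0
  have := (mul_eq_zero.mp h1.symm).resolve_left hlc
  linarith [neg_eq_zero.mp this]

open Polynomial in
/-- Building an equilibrium point out of the multiset of roots. -/
lemma aux_build (k n : ℕ) (hdvd : k ∣ n) (q : Polynomial ℝ) (hq0 : q ≠ 0)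
    (lam : ℝ) (p : Polynomial ℝ)
    (hqcard : Multiset.card q.roots = k)
    (hsum : q.roots.sum = 0)
    (hqp : ∀ x, q.IsRoot x → p.eval x = lam) :
    ∃ z : Fin n → ℝ, (∑ i, z i) = 0 ∧ (∀ i, p.eval (z i) = lam) := by
  set l := q.roots.toList with hldef
  have hlen : l.length = k := by rw [hldef, Multiset.length_toList, hqcard]
  set w : Fin k → ℝ := fun b => l.get (Fin.cast hlen.symm b) with hwdef
  have hw : ∀ b, p.eval (w b) = lam := by
    intro b
    apply hqp
    have hmem : w b ∈ l := by rw [hwdef]; exact l.get_mem _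
    rw [hldef, Multiset.mem_toList, mem_roots hq0] at hmem
    exact hmem
  have hwsum : ∑ b, w b = 0 := by
    have hofn : List.ofFn w = l := by
      apply List.ext_get (by simp [hlen])
      intro i h1 h2
      simp [hwdef]
    calc ∑ b, w b = (List.ofFn w).sum := (List.sum_ofFn (f := w)).symm
      _ = l.sum := by rw [hofn]
      _ = q.roots.sum := Multiset.sum_toList _
      _ = 0 := hsum
  have hnk : n = (n / k) * k := (Nat.div_mul_cancel hdvd).symm
  set e : Fin n ≃ Fin (n / k) × Fin k := (finCongr hnk).trans finProdFinEquiv.symm with hedef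
  refine ⟨fun i => w (e i).2, ?_, fun i => hw _⟩
  calc ∑ i, w (e i).2 = ∑ x : Fin (n / k) × Fin k, w x.2 :=
        Fintype.sum_equiv e _ _ (fun i => rfl)
    _ = ∑ a : Fin (n / k), ∑ b, w b := Fintype.sum_prod_type _
    _ = 0 := by simp [hwsum]

open Polynomial in
/-- If p is a nonzero odd real polynomial of degree k ≠ 1 having k
distinct real roots, and k divides n, then the set of edge states z ∈ ℝⁿ with
∑ z_i = 0 and p(z_i) constant in i (the equilibria of the nonlinear consensus
dynamics on the cycle Cₙ) is uncountable. -/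
theorem cycle_continuum_of_equilibria (p : Polynomial ℝ) (hp : p ≠ 0)
    (hodd : ∀ y : ℝ, p.eval (-y) = -p.eval y)
    (hdeg : p.natDegree ≠ 1)
    (hroots : p.roots.toFinset.card = p.natDegree)
    (n : ℕ) (hn : 0 < n) (hdvd : p.natDegree ∣ n) :
    ¬ Set.Countable {z : Fin n → ℝ |
        (∑ i, z i) = 0 ∧ ∃ l : ℝ, ∀ i, p.eval (z i) = l} := by
  set k := p.natDegree with hk
  set c := p.leadingCoeff with hcdef
  have hc : c ≠ 0 := leadingCoeff_ne_zero.mpr hp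
  -- odd polynomial: even coefficients vanish
  have hcomp : p.comp (-X) = -p := by
    apply Polynomial.funext
    intro x
    simp [eval_comp, hodd]
  have heven : ∀ m, Even m → p.coeff m = 0 := by
    intro m hm
    have h1 := aux_coeff_comp_neg_X p m
    rw [hcomp, coeff_neg, hm.neg_one_pow, one_mul] at h1
    linarith
  have hkodd : ¬ Even k := fun h => hc (heven k h)
  have hk0 : k ≠ 0 := fun h => hkodd (h ▸ Even.zero)
  have hk2 : 2 ≤ k := by omega
  have hkpos : 0 < k := by omega
  have hk1even : Even (k - 1) := Nat.Odd.sub_odd (Nat.not_even_iff_odd.mp hkodd) odd_one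
  -- sorted enumeration of the roots
  have hcard : Multiset.card p.roots = k :=
    le_antisymm p.card_roots' (hroots ▸ Multiset.toFinset_card_le _)
  have hnodup : p.roots.Nodup :=
    Multiset.toFinset_card_eq_card_iff_nodup.mp (hroots.trans hcard.symm)
  set L := p.roots.sort (· ≤ ·) with hLdef
  have hL : L.length = k := by rw [hLdef, Multiset.length_sort, hcard]
  have hLnodup : L.Nodup := by
    have := Multiset.sort_eq p.roots (· ≤ ·)
    rw [← this] at hnodup
    exact hnodup
  have hLsorted : L.Pairwise (· < ·) :=
    ((Multiset.pairwise_sort p.roots (· ≤ ·)).and hLnodup).imp fun h => lt_of_le_of_ne h.1 h.2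
  set r : Fin k → ℝ := fun i => L.get (Fin.cast hL.symm i) with hrdef
  have hr : StrictMono r := by
    intro a b hab
    exact hLsorted.rel_get_of_lt (show Fin.cast hL.symm a < Fin.cast hL.symm b from hab)
  have hrootseq : p.roots = ↑(List.ofFn r) := by
    have hofn : List.ofFn r = L := by
      apply List.ext_get (by simp [hL])
      intro i h1 h2
      simp [hrdef]
    rw [hofn, hLdef, Multiset.sort_eq]
  -- evaluation formula
  have heval : ∀ x : ℝ, p.eval x = c * ∏ j, (x - r j) := by
    intro x
    conv_lhs => rw [← C_leadingCoeff_mul_prod_multiset_X_sub_C hcard]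
    rw [hrootseq, eval_mul, eval_C]
    congr 1
    rw [Multiset.map_coe, Multiset.prod_coe, List.map_ofFn, List.prod_ofFn, eval_prod]
    simp
  -- test points separating the roots
  set t : Fin (k+1) → ℝ := fun j =>
    if h0 : (j : ℕ) = 0 then r ⟨0, hkpos⟩ - 1
    else if hk' : (j : ℕ) = k then r ⟨k - 1, Nat.sub_lt hkpos one_pos⟩ + 1
    else (r ⟨(j : ℕ) - 1, by omega⟩ + r ⟨(j : ℕ), by omega⟩) / 2 with htdef
  have hpat : ∀ j : Fin (k+1), ∀ i : Fin k,
      ((i : ℕ) < (j : ℕ) → r i < t j) ∧ ((j : ℕ) ≤ (i : ℕ) → t j < r i) := by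
    intro j i
    rw [htdef]
    simp only
    split_ifs with h0 hk'
    · refine ⟨fun h => absurd h (by omega), fun _ => ?_⟩
      have : r ⟨0, hkpos⟩ ≤ r i := hr.monotone (by simp [Fin.le_def])
      linarith
    · refine ⟨fun _ => ?_, fun h => absurd h (by omega)⟩
      have : r i ≤ r ⟨k - 1, Nat.sub_lt hkpos one_pos⟩ :=
        hr.monotone (by simp [Fin.le_def]; omega)
      linarith
    · have hkey : r ⟨(j : ℕ) - 1, by omega⟩ < r ⟨(j : ℕ), by omega⟩ :=
        hr (Fin.mk_lt_mk.mpr (by omega))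
      refine ⟨fun h => ?_, fun h => ?_⟩
      · have : r i ≤ r ⟨(j : ℕ) - 1, by omega⟩ := hr.monotone (by simp [Fin.le_def]; omega)
        linarith
      · have : r ⟨(j : ℕ), by omega⟩ ≤ r i := hr.monotone (by simp [Fin.le_def]; omega)
        linarith
  have hsand : ∀ i : Fin k, t i.castSucc < r i ∧ r i < t i.succ := fun i =>
    ⟨(hpat i.castSucc i).2 (by simp), (hpat i.succ i).1 (by simp)⟩
  have ht : StrictMono t := by
    rw [Fin.strictMono_iff_lt_succ]
    intro i
    exact (hsand i).1.trans (hsand i).2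
  -- sign conditions at the test points
  have hne : ∀ j, p.eval (t j) ≠ 0 := by
    intro j
    rw [heval]
    refine mul_ne_zero hc (Finset.prod_ne_zero_iff.mpr fun i _ => ?_)
    rcases lt_or_ge (i : ℕ) (j : ℕ) with h | h
    · exact sub_ne_zero.mpr (ne_of_gt ((hpat j i).1 h))
    · exact sub_ne_zero.mpr (ne_of_lt ((hpat j i).2 h))
  have halt : ∀ i : Fin k, p.eval (t i.castSucc) * p.eval (t i.succ) < 0 := by
    intro i
    rw [heval, heval]
    have hrw : c * (∏ j, (t i.castSucc - r j)) * (c * ∏ j, (t i.succ - r j))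
        = c ^ 2 * ∏ j, ((t i.castSucc - r j) * (t i.succ - r j)) := by
      rw [Finset.prod_mul_distrib]; ring
    rw [hrw]
    apply mul_neg_of_pos_of_neg (by positivity)
    rw [← Finset.mul_prod_erase Finset.univ _ (Finset.mem_univ i)]
    apply mul_neg_of_neg_of_pos
    · apply mul_neg_of_neg_of_pos
      · have := (hpat i.castSucc i).2 (by simp)
        linarith
      · have := (hpat i.succ i).1 (by simp)
        linarith
    · apply Finset.prod_pos
      intro j hj
      have hji : j ≠ i := (Finset.mem_erase.mp hj).1
      rcases lt_or_ge (j : ℕ) (i : ℕ) with h | h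
      · have h1 := (hpat i.castSucc j).1 (by simpa using h)
        have h2 := (hpat i.succ j).1 (by simp; omega)
        apply mul_pos <;> linarith
      · have h' : (i : ℕ) < (j : ℕ) := by
          rcases lt_or_eq_of_le h with h | h
          · exact h
          · exact absurd (Fin.ext h.symm) hji
        have h1 := (hpat i.castSucc j).2 (by simpa using h'.le)
        have h2 := (hpat i.succ j).2 (by simp; omega)
        apply mul_pos_of_neg_of_neg <;> linarith
  -- threshold
  have hfne : (Finset.univ : Finset (Fin (k+1))).Nonempty := Finset.univ_nonempty
  set ε : ℝ := Finset.univ.inf' hfne (fun j => |p.eval (t j)|) with hεdef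
  have hε : 0 < ε := by
    rw [hεdef, Finset.lt_inf'_iff]
    intro j _
    exact abs_pos.mpr (hne j)
  -- every lambda in (-ε, ε) is attained on the set
  have hsub : Set.Ioo (-ε) ε ⊆ (fun z : Fin n → ℝ => p.eval (z ⟨0, hn⟩)) ''
      {z : Fin n → ℝ | (∑ i, z i) = 0 ∧ ∃ l : ℝ, ∀ i, p.eval (z i) = l} := by
    intro lam hlam
    have hlamabs : |lam| < ε := abs_lt.mpr ⟨hlam.1, hlam.2⟩
    have hlamle : ∀ j, |lam| < |p.eval (t j)| := fun j =>
      lt_of_lt_of_le hlamabs (Finset.inf'_le _ (Finset.mem_univ j))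
    set q : Polynomial ℝ := p - C lam with hqdef
    have hqdeg : q.natDegree = k := natDegree_sub_C
    have hq0 : q ≠ 0 := fun h => hk0 (hqdeg.symm.trans (by rw [h, natDegree_zero]))
    have hqeval : ∀ x, q.eval x = p.eval x - lam := by intro x; simp [hqdef]
    have qalt : ∀ i : Fin k, q.eval (t i.castSucc) * q.eval (t i.succ) < 0 := by
      intro i
      rw [hqeval, hqeval]
      exact aux_sign _ _ _ (halt i) (hlamle _) (hlamle _)
    have hqcard := aux_card_roots q k hqdeg hq0 t ht qalt
    have hqcoeff : q.coeff (k - 1) = 0 := by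
      rw [hqdef, coeff_sub, coeff_C, if_neg (by omega), heven _ hk1even, sub_zero]
    have hqsum := aux_sum_roots q k hk2 hqdeg hq0 hqcard hqcoeff
    obtain ⟨z, hz1, hz2⟩ := aux_build k n hdvd q hq0 lam p hqcard hqsum
      (fun x hx => by have : q.eval x = 0 := hx; rw [hqeval] at this; linarith)
    exact ⟨z, ⟨hz1, lam, hz2⟩, hz2 ⟨0, hn⟩⟩
  -- conclude by uncountability of the interval
  intro hcount
  have h1 : (Set.Ioo (-ε) ε).Countable :=
    Set.Countable.mono hsub (hcount.image _)
  have h2 : (Cardinal.mk (Set.Ioo (-ε) ε)) ≤ Cardinal.aleph0 :=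
    Cardinal.le_aleph0_iff_set_countable.mpr h1
  rw [Cardinal.mk_Ioo_real (by linarith)] at h2
  exact absurd h2 (not_le.mpr Cardinal.aleph0_lt_continuum)
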